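/- Let C be a cartesian category satisfying axioms (G) and (Π). For any binary relation given by a jointly monic pair m₁ : M ⟶ X, m₂ : M ⟶ Y there exists a monomorphism a : A ⟶ X such that for every element x of X: x ∈ a if and only if for every element y of Y, (x,y) ∈ (m₁,m₂). -/

import Mathlib

open CategoryTheory CategoryTheory.Limits

namespace CETCS

universe v u

variable {C : Type u} [Category.{v} C] [HasTerminal C]

/-- A morphism is onto if every (global) element of the codomain is hit. -/
def Onto {A B : C} (f : A ⟶ B) : Prop :=
  ∀ y : ⊤_ C ⟶ B, ∃ x : ⊤_ C ⟶ A, x ≫ f = y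

/-- Membership `x ∈ m` of an element in (the subobject given by) a morphism. -/
def Mem {M X : C} (m : M ⟶ X) (x : ⊤_ C ⟶ X) : Prop :=
  ∃ a : ⊤_ C ⟶ M, a ≫ m = x

/-- Membership `(x, y) ∈ (r₁, r₂)` for a binary relation. -/
def Mem2 {R X Y : C} (r₁ : R ⟶ X) (r₂ : R ⟶ Y) (x : ⊤_ C ⟶ X) (y : ⊤_ C ⟶ Y) : Prop :=
  ∃ a : ⊤_ C ⟶ R, a ≫ r₁ = x ∧ a ≫ r₂ = y

/-- Membership `(x, y, z) ∈ (r₁, r₂, r₃)` for a ternary relation. -/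
def Mem3 {R X Y Z : C} (r₁ : R ⟶ X) (r₂ : R ⟶ Y) (r₃ : R ⟶ Z)
    (x : ⊤_ C ⟶ X) (y : ⊤_ C ⟶ Y) (z : ⊤_ C ⟶ Z) : Prop :=
  ∃ a : ⊤_ C ⟶ R, a ≫ r₁ = x ∧ a ≫ r₂ = y ∧ a ≫ r₃ = z

/-- Axiom (G): every morphism that is both mono and onto is an isomorphism. -/
def AxiomG (C : Type u) [Category.{v} C] [HasTerminal C] : Prop :=
  ∀ {A B : C} (f : A ⟶ B), Mono f → Onto f → IsIso f

/-- A pair of morphisms with common domain is jointly monic. -/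
def JointlyMonic2 {R X Y : C} (r₁ : R ⟶ X) (r₂ : R ⟶ Y) : Prop :=
  ∀ {U : C} (f g : U ⟶ R), f ≫ r₁ = g ≫ r₁ → f ≫ r₂ = g ≫ r₂ → f = g

/-- A triple of morphisms with common domain is jointly monic. -/
def JointlyMonic3 {R X Y Z : C} (r₁ : R ⟶ X) (r₂ : R ⟶ Y) (r₃ : R ⟶ Z) : Prop :=
  ∀ {U : C} (f g : U ⟶ R), f ≫ r₁ = g ≫ r₁ → f ≫ r₂ = g ≫ r₂ → f ≫ r₃ = g ≫ r₃ → f = g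

/-- Axiom (Fct): every morphism factors as an onto morphism followed by a mono. -/
def AxiomFct (C : Type u) [Category.{v} C] [HasTerminal C] : Prop :=
  ∀ {A B : C} (f : A ⟶ B), ∃ (I : C) (e : A ⟶ I) (i : I ⟶ B), Onto e ∧ Mono i ∧ e ≫ i = f

/-- A morphism is a cover if any mono through which it factors is an isomorphism. -/
def IsCover {A B : C} (f : A ⟶ B) : Prop :=
  ∀ {I : C} (g : A ⟶ I) (m : I ⟶ B), Mono m → g ≫ m = f → IsIso m

/-- A choice object: every onto morphism into it has a section. -/
def ChoiceObject (P : C) : Prop :=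
  ∀ {A : C} (f : A ⟶ P), Onto f → ∃ g : P ⟶ A, g ≫ f = 𝟙 P

/-- Axiom (PA): every object is covered by a choice object. -/
def AxiomPA (C : Type u) [Category.{v} C] [HasTerminal C] : Prop :=
  ∀ A : C, ∃ (P : C) (p : P ⟶ A), ChoiceObject P ∧ Onto p

/-- Axiom (Π): universal dependent products exist. -/
def AxiomPi (C : Type u) [Category.{v} C] [HasTerminal C] : Prop :=
  ∀ {Y X I : C} (g : Y ⟶ X) (f : X ⟶ I),
    ∃ (P F : C) (ev : P ⟶ Y) (π₁ : P ⟶ F) (π₂ : P ⟶ X) (φ : F ⟶ I),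
      ev ≫ g = π₂ ∧ IsPullback π₂ π₁ f φ ∧
      ∀ (i : ⊤_ C ⟶ I) {R : C} (r₁ : R ⟶ X) (r₂ : R ⟶ Y), Mono r₁ →
        (∀ (x : ⊤_ C ⟶ X) (y : ⊤_ C ⟶ Y), Mem2 r₁ r₂ x y → y ≫ g = x ∧ x ≫ f = i) →
        (∀ x : ⊤_ C ⟶ X, x ≫ f = i → ∃ y : ⊤_ C ⟶ Y, Mem2 r₁ r₂ x y) →
        ∃! s : ⊤_ C ⟶ F, s ≫ φ = i ∧
          ∀ (x : ⊤_ C ⟶ X) (y : ⊤_ C ⟶ Y), Mem3 π₁ π₂ ev s x y ↔ Mem2 r₁ r₂ x y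

/-- `i, j` form a binary coproduct (sum) diagram. -/
def IsCoproductDiagram {A B S : C} (i : A ⟶ S) (j : B ⟶ S) : Prop :=
  ∀ {T : C} (f : A ⟶ T) (g : B ⟶ T), ∃! h : S ⟶ T, i ≫ h = f ∧ j ≫ h = g

/-- Axiom (DP): each element of a sum is a member of one of its injections. -/
def AxiomDP (C : Type u) [Category.{v} C] [HasTerminal C] : Prop :=
  ∀ {A B S : C} (i : A ⟶ S) (j : B ⟶ S), IsCoproductDiagram i j →
    ∀ z : ⊤_ C ⟶ S, Mem i z ∨ Mem j z

/-- An equivalence relation: jointly monic and reflexive, symmetric, transitive on elements. -/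
def EquivRelation {R X : C} (r₁ r₂ : R ⟶ X) : Prop :=
  JointlyMonic2 r₁ r₂ ∧
  (∀ x : ⊤_ C ⟶ X, Mem2 r₁ r₂ x x) ∧
  (∀ x y : ⊤_ C ⟶ X, Mem2 r₁ r₂ x y → Mem2 r₁ r₂ y x) ∧
  (∀ x y z : ⊤_ C ⟶ X, Mem2 r₁ r₂ x y → Mem2 r₁ r₂ y z → Mem2 r₁ r₂ x z)

/-- Axiom (Eff): all equivalence relations are effective. -/
def AxiomEff (C : Type u) [Category.{v} C] [HasTerminal C] : Prop :=
  ∀ {R X : C} (r₁ r₂ : R ⟶ X), EquivRelation r₁ r₂ →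
    ∃ (E : C) (e : X ⟶ E), ∀ x₁ x₂ : ⊤_ C ⟶ X, Mem2 r₁ r₂ x₁ x₂ ↔ x₁ ≫ e = x₂ ≫ e

/-- `z : 1 ⟶ N`, `S : N ⟶ N` form a natural numbers object. -/
def IsNNO {N : C} (z : ⊤_ C ⟶ N) (S : N ⟶ N) : Prop :=
  ∀ {A : C} (b : ⊤_ C ⟶ A) (h : A ⟶ A), ∃! f : N ⟶ A, z ≫ f = b ∧ S ≫ f = f ≫ h

/-- A Π-diagram for `g : Y ⟶ X`, `f : X ⟶ I`. -/
def IsPiDiagram {Y X I P F : C} (g : Y ⟶ X) (f : X ⟶ I)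
    (ev : P ⟶ Y) (π₁ : P ⟶ F) (π₂ : P ⟶ X) (φ : F ⟶ I) : Prop :=
  ev ≫ g = π₂ ∧ IsPullback π₂ π₁ f φ

/-- A universal Π-diagram for `g : Y ⟶ X`, `f : X ⟶ I`. -/
def IsUniversalPiDiagram {Y X I P F : C} (g : Y ⟶ X) (f : X ⟶ I)
    (ev : P ⟶ Y) (π₁ : P ⟶ F) (π₂ : P ⟶ X) (φ : F ⟶ I) : Prop :=
  ∀ {P' F' : C} (ev' : P' ⟶ Y) (π₁' : P' ⟶ F') (π₂' : P' ⟶ X) (φ' : F' ⟶ I),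
    IsPiDiagram g f ev' π₁' π₂' φ' →
    ∃! n : F' ⟶ F, φ' = n ≫ φ ∧
      ∀ m : P' ⟶ P, m ≫ π₁ = π₁' ≫ n → m ≫ π₂ = π₂' → m ≫ ev = ev'

/-- Every morphism factors as a cover followed by a mono. -/
def HasCoverMonoFactorizations (C : Type u) [Category.{v} C] [HasTerminal C] : Prop :=
  ∀ {A B : C} (f : A ⟶ B), ∃ (I : C) (e : A ⟶ I) (m : I ⟶ B), IsCover e ∧ Mono m ∧ e ≫ m = f

/-- Covers are stable under pullback. -/
def CoversPullbackStable (C : Type u) [Category.{v} C] [HasTerminal C] : Prop :=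
  ∀ {P A B Z : C} (p : P ⟶ A) (q : P ⟶ B) (f : A ⟶ Z) (g : B ⟶ Z),
    IsPullback p q f g → IsCover f → IsCover q

/-- The terminal object is projective (with respect to covers). -/
def TerminalProjective (C : Type u) [Category.{v} C] [HasTerminal C] : Prop :=
  ∀ {A B : C} (e : A ⟶ B), IsCover e → ∀ h : ⊤_ C ⟶ B, ∃ k : ⊤_ C ⟶ A, k ≫ e = h


/-- (Universal quantification) In a cartesian category satisfying (G) and (Π), any binary
relation between X and Y has a universal subobject of X whose members are exactly the x related
to every y. -/
theorem statement18 {C : Type u} [Category.{v} C]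
    [HasTerminal C] [HasBinaryProducts C] [HasEqualizers C]
    (hG : AxiomG C) (hPi : AxiomPi C)
    {M X Y : C} (m₁ : M ⟶ X) (m₂ : M ⟶ Y) (hjm : JointlyMonic2 m₁ m₂) :
    ∃ (A : C) (a : A ⟶ X), Mono a ∧
      ∀ x : ⊤_ C ⟶ X, (Mem a x ↔ ∀ y : ⊤_ C ⟶ Y, Mem2 m₁ m₂ x y) := by
  classical
  have hm : Mono (prod.lift m₁ m₂) := by
    constructor
    intro U u v h
    apply hjm
    · have := h =≫ (prod.fst : X ⨯ Y ⟶ X)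
      simpa [prod.lift_fst, prod.lift_snd, prod.lift_fst_assoc, prod.lift_snd_assoc] using this
    · have := h =≫ (prod.snd : X ⨯ Y ⟶ Y)
      simpa [prod.lift_fst, prod.lift_snd, prod.lift_fst_assoc, prod.lift_snd_assoc] using this
  obtain ⟨P, F, ev, p1, p2, φ, hev, hpb, hU⟩ :=
    hPi (prod.lift m₁ m₂) (prod.fst : X ⨯ Y ⟶ X)
  -- Forward direction: any element of F over x witnesses ∀ y, (x,y) ∈ (m₁,m₂).
  have fw : ∀ (s : ⊤_ C ⟶ F) (y : ⊤_ C ⟶ Y), Mem2 m₁ m₂ (s ≫ φ) y := by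
    intro s y
    have hz : prod.lift (s ≫ φ) y ≫ (prod.fst : X ⨯ Y ⟶ X) = s ≫ φ := by simp [prod.lift_fst, prod.lift_snd, prod.lift_fst_assoc, prod.lift_snd_assoc]
    have h2 : hpb.lift (prod.lift (s ≫ φ) y) s hz ≫ p2 = prod.lift (s ≫ φ) y :=
      hpb.lift_fst _ _ _
    have hg : (hpb.lift (prod.lift (s ≫ φ) y) s hz ≫ ev) ≫ prod.lift m₁ m₂ =
        prod.lift (s ≫ φ) y := by
      rw [Category.assoc, hev, h2]
    refine ⟨hpb.lift (prod.lift (s ≫ φ) y) s hz ≫ ev, ?_, ?_⟩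
    · have := hg =≫ (prod.fst : X ⨯ Y ⟶ X)
      simpa [prod.lift_fst, prod.lift_snd, prod.lift_fst_assoc, prod.lift_snd_assoc] using this
    · have := hg =≫ (prod.snd : X ⨯ Y ⟶ Y)
      simpa [prod.lift_fst, prod.lift_snd, prod.lift_fst_assoc, prod.lift_snd_assoc] using this
  -- Key: existence and uniqueness of elements of F over any x with the ∀-property.
  have key : ∀ x : ⊤_ C ⟶ X, (∀ y : ⊤_ C ⟶ Y, Mem2 m₁ m₂ x y) →
      (∃ s : ⊤_ C ⟶ F, s ≫ φ = x) ∧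
      (∀ s s' : ⊤_ C ⟶ F, s ≫ φ = x → s' ≫ φ = x → s = s') := by
    intro x hx
    -- the fiber of m₁ over x, as an equalizer
    let r₂ : equalizer m₁ (terminal.from M ≫ x) ⟶ M := equalizer.ι _ _
    let r₁ : equalizer m₁ (terminal.from M ≫ x) ⟶ X ⨯ Y := r₂ ≫ prod.lift m₁ m₂
    have hcond : r₂ ≫ m₁ = r₂ ≫ (terminal.from M ≫ x) := equalizer.condition _ _
    have hterm : ∀ {U : C} (u : U ⟶ equalizer m₁ (terminal.from M ≫ x)),
        (u ≫ r₂) ≫ m₁ = terminal.from U ≫ x := by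
      intro U u
      rw [Category.assoc, hcond, ← Category.assoc, ← Category.assoc]
      congr 1
      apply Subsingleton.elim
    have htop : ∀ a : ⊤_ C ⟶ equalizer m₁ (terminal.from M ≫ x),
        (a ≫ r₂) ≫ m₁ = x := by
      intro a
      rw [hterm a]
      have : terminal.from (⊤_ C) = 𝟙 (⊤_ C) := Subsingleton.elim _ _
      rw [this, Category.id_comp]
    have hmr₁ : Mono r₁ := by
      constructor
      intro U u v h
      have h2 : (u ≫ r₂) ≫ m₂ = (v ≫ r₂) ≫ m₂ := by
        have := h =≫ (prod.snd : X ⨯ Y ⟶ Y)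
        simpa [prod.lift_fst, prod.lift_snd, prod.lift_fst_assoc, prod.lift_snd_assoc, r₁] using this
      have h1 : (u ≫ r₂) ≫ m₁ = (v ≫ r₂) ≫ m₁ := by rw [hterm u, hterm v]
      have := hjm (u ≫ r₂) (v ≫ r₂) h1 h2
      exact (cancel_mono r₂).mp this
    have hlift : ∀ c : ⊤_ C ⟶ M, c ≫ m₁ = x →
        ∃ b : ⊤_ C ⟶ equalizer m₁ (terminal.from M ≫ x), b ≫ r₂ = c := by
      intro c hc
      have hc' : c ≫ m₁ = c ≫ (terminal.from M ≫ x) := by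
        rw [hc, ← Category.assoc]
        have : c ≫ terminal.from M = 𝟙 (⊤_ C) := Subsingleton.elim _ _
        rw [this, Category.id_comp]
      exact ⟨equalizer.lift c hc', equalizer.lift_ι _ _⟩
    have conda : ∀ (z : ⊤_ C ⟶ X ⨯ Y) (w : ⊤_ C ⟶ M), Mem2 r₁ r₂ z w →
        w ≫ prod.lift m₁ m₂ = z ∧ z ≫ (prod.fst : X ⨯ Y ⟶ X) = x := by
      rintro z w ⟨a, ha1, ha2⟩
      constructor
      · rw [← ha2, Category.assoc]
        exact ha1
      · rw [← ha1]
        have : (a ≫ r₁) ≫ (prod.fst : X ⨯ Y ⟶ X) = (a ≫ r₂) ≫ m₁ := by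
          simp [prod.lift_fst, prod.lift_snd, prod.lift_fst_assoc, prod.lift_snd_assoc, r₁]
        rw [this, htop a]
    have condb : ∀ z : ⊤_ C ⟶ X ⨯ Y, z ≫ (prod.fst : X ⨯ Y ⟶ X) = x →
        ∃ w, Mem2 r₁ r₂ z w := by
      intro z hz
      obtain ⟨c, hc1, hc2⟩ := hx (z ≫ prod.snd)
      obtain ⟨b, hb⟩ := hlift c hc1
      refine ⟨c, b, ?_, hb⟩
      have : b ≫ r₁ = (b ≫ r₂) ≫ prod.lift m₁ m₂ := by simp [r₁]
      rw [this, hb]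
      apply Limits.prod.hom_ext
      · simp [prod.lift_fst, prod.lift_snd, prod.lift_fst_assoc, prod.lift_snd_assoc, hc1, hz]
      · simp [prod.lift_fst, prod.lift_snd, prod.lift_fst_assoc, prod.lift_snd_assoc, hc2]
    obtain ⟨s, ⟨hs1, _⟩, hsu⟩ := hU x r₁ r₂ hmr₁ conda condb
    -- transfer: every element of F over x classifies the fiber relation
    have transfer : ∀ s' : ⊤_ C ⟶ F, s' ≫ φ = x →
        ∀ (z : ⊤_ C ⟶ X ⨯ Y) (w : ⊤_ C ⟶ M),
          Mem3 p1 p2 ev s' z w ↔ Mem2 r₁ r₂ z w := by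
      intro s' hs' z w
      constructor
      · rintro ⟨a, ha1, ha2, ha3⟩
        have hwg : w ≫ prod.lift m₁ m₂ = z := by
          rw [← ha3, ← ha2, Category.assoc, hev]
        have hzf : z ≫ (prod.fst : X ⨯ Y ⟶ X) = x := by
          rw [← ha2, Category.assoc, hpb.w, ← Category.assoc, ha1, hs']
        have hwm : w ≫ m₁ = x := by
          have h' := hwg =≫ (prod.fst : X ⨯ Y ⟶ X)
          simp only [Category.assoc, prod.lift_fst] at h'
          rw [h', hzf]
        obtain ⟨b, hb⟩ := hlift w hwm
        refine ⟨b, ?_, hb⟩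
        have : b ≫ r₁ = (b ≫ r₂) ≫ prod.lift m₁ m₂ := by simp [r₁]
        rw [this, hb, hwg]
      · rintro ⟨b, hb1, hb2⟩
        have hzg : w ≫ prod.lift m₁ m₂ = z := by
          rw [← hb2, Category.assoc, ← hb1]
        have hzf : z ≫ (prod.fst : X ⨯ Y ⟶ X) = s' ≫ φ := by
          rw [hs', ← hb1]
          have : (b ≫ r₁) ≫ (prod.fst : X ⨯ Y ⟶ X) = (b ≫ r₂) ≫ m₁ := by
            simp [prod.lift_fst, prod.lift_snd, prod.lift_fst_assoc, prod.lift_snd_assoc, r₁]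
          rw [this, htop b]
        refine ⟨hpb.lift z s' hzf, hpb.lift_snd _ _ _, hpb.lift_fst _ _ _, ?_⟩
        haveI := hm
        rw [← cancel_mono (prod.lift m₁ m₂), hzg, Category.assoc, hev,
          hpb.lift_fst]
    refine ⟨⟨s, hs1⟩, ?_⟩
    intro s1 s2 h1 h2
    have e1 : s1 = s := hsu s1 ⟨h1, transfer s1 h1⟩
    have e2 : s2 = s := hsu s2 ⟨h2, transfer s2 h2⟩
    rw [e1, e2]
  -- φ is mono, via axiom (G) applied to the diagonal into the kernel pair of φ
  have monoφ : Mono φ := by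
    have hkc : equalizer.ι ((prod.fst : F ⨯ F ⟶ F) ≫ φ) (prod.snd ≫ φ) ≫
        (prod.fst ≫ φ) =
        equalizer.ι ((prod.fst : F ⨯ F ⟶ F) ≫ φ) (prod.snd ≫ φ) ≫
        (prod.snd ≫ φ) := equalizer.condition _ _
    have hδc : prod.lift (𝟙 F) (𝟙 F) ≫ ((prod.fst : F ⨯ F ⟶ F) ≫ φ) =
        prod.lift (𝟙 F) (𝟙 F) ≫ (prod.snd ≫ φ) := by simp [prod.lift_fst, prod.lift_snd, prod.lift_fst_assoc, prod.lift_snd_assoc]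
    set δ : F ⟶ equalizer ((prod.fst : F ⨯ F ⟶ F) ≫ φ) (prod.snd ≫ φ) :=
      equalizer.lift (prod.lift (𝟙 F) (𝟙 F)) hδc with hδ
    have hδk : δ ≫ equalizer.ι _ _ = prod.lift (𝟙 F) (𝟙 F) := equalizer.lift_ι _ _
    have monoδ : Mono δ := by
      constructor
      intro U u v h
      have := h =≫ (equalizer.ι _ _ ≫ (prod.fst : F ⨯ F ⟶ F))
      simp only [← Category.assoc] at this
      rw [Category.assoc u, Category.assoc v, hδk] at this
      simpa [prod.lift_fst, prod.lift_snd, prod.lift_fst_assoc, prod.lift_snd_assoc] using this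
    have ontoδ : Onto δ := by
      intro t
      have heq : (t ≫ equalizer.ι _ _ ≫ (prod.fst : F ⨯ F ⟶ F)) ≫ φ =
          (t ≫ equalizer.ι _ _ ≫ (prod.snd : F ⨯ F ⟶ F)) ≫ φ := by
        have := t ≫= hkc
        simpa [Category.assoc] using this
      obtain ⟨-, huniq⟩ := key ((t ≫ equalizer.ι _ _ ≫ (prod.fst : F ⨯ F ⟶ F)) ≫ φ)
        (fw _)
      have hss : t ≫ equalizer.ι _ _ ≫ (prod.snd : F ⨯ F ⟶ F) =
          t ≫ equalizer.ι _ _ ≫ (prod.fst : F ⨯ F ⟶ F) :=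
        huniq _ _ heq.symm rfl
      refine ⟨t ≫ equalizer.ι _ _ ≫ (prod.fst : F ⨯ F ⟶ F), ?_⟩
      have hgoal : ((t ≫ equalizer.ι _ _ ≫ (prod.fst : F ⨯ F ⟶ F)) ≫ δ) ≫
          equalizer.ι _ _ = t ≫ equalizer.ι _ _ := by
        rw [Category.assoc, hδk]
        apply Limits.prod.hom_ext
        · simp [prod.lift_fst, prod.lift_snd, prod.lift_fst_assoc, prod.lift_snd_assoc]
        · simp [prod.lift_fst, prod.lift_snd, prod.lift_fst_assoc, prod.lift_snd_assoc, hss]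
      exact (cancel_mono (equalizer.ι _ _)).mp hgoal
    have hiso := hG δ monoδ ontoδ
    have hk12 : equalizer.ι ((prod.fst : F ⨯ F ⟶ F) ≫ φ) (prod.snd ≫ φ) ≫
        (prod.fst : F ⨯ F ⟶ F) = equalizer.ι _ _ ≫ prod.snd := by
      haveI := hiso
      rw [← cancel_epi δ, ← Category.assoc, ← Category.assoc, hδk]
      simp [prod.lift_fst, prod.lift_snd, prod.lift_fst_assoc, prod.lift_snd_assoc]
    constructor
    intro U u v h
    have hc : prod.lift u v ≫ ((prod.fst : F ⨯ F ⟶ F) ≫ φ) =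
        prod.lift u v ≫ (prod.snd ≫ φ) := by
      rw [← Category.assoc, ← Category.assoc, prod.lift_fst, prod.lift_snd, h]
    have h1 : equalizer.lift (prod.lift u v) hc ≫ equalizer.ι _ _ =
        prod.lift u v := equalizer.lift_ι _ _
    have h2 := h1 =≫ (prod.fst : F ⨯ F ⟶ F)
    have h3 := h1 =≫ (prod.snd : F ⨯ F ⟶ F)
    rw [Category.assoc, prod.lift_fst, hk12] at h2
    rw [Category.assoc, prod.lift_snd] at h3
    exact h2.symm.trans h3
  refine ⟨F, φ, monoφ, fun x => ⟨?_, ?_⟩⟩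
  · rintro ⟨s, hs⟩ y
    rw [← hs]
    exact fw s y
  · intro hx
    obtain ⟨⟨s, hs⟩, -⟩ := key x hx
    exact ⟨s, hs⟩

end CETCS
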